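/- Let X, Y, X_1, …, X_m be bounded random variables. Then the joint cumulant satisfies Malyshev's formula in the special case: M(XY, X_1, …, X_m) = M(X, Y, X_1, …, X_m) + ∑_{J ⊆ {1,…,m}} M(X; J) · M(Y; {1,…,m} \ J), where M(X; J) denotes the joint cumulant of X together with (X_j)_{j ∈ J}, with the convention M(X; ∅) = E[X]. -/

import Mathlib

open MeasureTheory Finset
open scoped Classical

noncomputable def jointCumulant {Ω : Type*} [MeasurableSpace Ω] (μ : Measure Ω)
    {ι : Type*} (s : Finset ι) (X : ι → Ω → ℝ) : ℝ :=
  ∑ π ∈ (s.powerset.powerset).filter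
      (fun π : Finset (Finset ι) =>
        (∀ B ∈ π, B.Nonempty) ∧ ∀ i ∈ s, ∃! B, B ∈ π ∧ i ∈ B),
    (-1 : ℝ) ^ (π.card - 1) * ((π.card - 1).factorial : ℝ) *
      ∏ B ∈ π, ∫ ω, (∏ i ∈ B, X i ω) ∂μ

set_option maxHeartbeats 2000000
set_option linter.constructorNameAsVariable false

namespace Maly


variable {ι κ : Type*}

/-- weights -/
noncomputable def wtn (n : ℕ) : ℝ := (-1 : ℝ) ^ (n - 1) * ((n - 1).factorial : ℝ)

noncomputable def parts (s : Finset ι) : Finset (Finset (Finset ι)) :=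
  (s.powerset.powerset).filter
      (fun π : Finset (Finset ι) =>
        (∀ B ∈ π, B.Nonempty) ∧ ∀ i ∈ s, ∃! B, B ∈ π ∧ i ∈ B)

lemma jointCumulant_eq {Ω : Type*} [MeasurableSpace Ω] (μ : Measure Ω)
    (s : Finset ι) (X : ι → Ω → ℝ) :
    jointCumulant μ s X = ∑ π ∈ parts s, wtn π.card * ∏ B ∈ π, ∫ ω, (∏ i ∈ B, X i ω) ∂μ := rfl

lemma mem_parts {s : Finset ι} {π : Finset (Finset ι)} :
    π ∈ parts s ↔ (∀ B ∈ π, B ⊆ s) ∧ (∀ B ∈ π, B.Nonempty) ∧ ∀ i ∈ s, ∃! B, B ∈ π ∧ i ∈ B := by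
  simp only [parts, mem_filter, mem_powerset, and_congr_left_iff]
  intro _
  constructor
  · rintro h B hB; exact mem_powerset.1 (h hB)
  · intro h B hB; exact mem_powerset.2 (h B hB)

lemma parts_block_subset {s : Finset ι} {π : Finset (Finset ι)} (h : π ∈ parts s)
    {B : Finset ι} (hB : B ∈ π) : B ⊆ s := (mem_parts.1 h).1 B hB

lemma parts_block_nonempty {s : Finset ι} {π : Finset (Finset ι)} (h : π ∈ parts s)
    {B : Finset ι} (hB : B ∈ π) : B.Nonempty := (mem_parts.1 h).2.1 B hB

lemma parts_disj {s : Finset ι} {π : Finset (Finset ι)} (h : π ∈ parts s)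
    {B B' : Finset ι} (hB : B ∈ π) (hB' : B' ∈ π) {i : ι} (hi : i ∈ B) (hi' : i ∈ B') :
    B = B' := by
  obtain ⟨C, _, hu⟩ := (mem_parts.1 h).2.2 i (parts_block_subset h hB hi)
  rw [hu B ⟨hB, hi⟩, hu B' ⟨hB', hi'⟩]

lemma parts_cover {s : Finset ι} {π : Finset (Finset ι)} (h : π ∈ parts s)
    {i : ι} (hi : i ∈ s) : ∃ B ∈ π, i ∈ B := by
  obtain ⟨C, hC, _⟩ := (mem_parts.1 h).2.2 i hi
  exact ⟨C, hC.1, hC.2⟩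

lemma mem_parts_of (s : Finset ι) (π : Finset (Finset ι))
    (h1 : ∀ B ∈ π, B ⊆ s) (h2 : ∀ B ∈ π, B.Nonempty)
    (h3 : ∀ i ∈ s, ∃ B ∈ π, i ∈ B)
    (h4 : ∀ B ∈ π, ∀ B' ∈ π, ∀ i, i ∈ B → i ∈ B' → B = B') : π ∈ parts s := by
  refine mem_parts.2 ⟨h1, h2, fun i hi => ?_⟩
  obtain ⟨B, hB, hiB⟩ := h3 i hi
  exact ⟨B, ⟨hB, hiB⟩, fun B' ⟨hB', hiB'⟩ => h4 B' hB' B hB i hiB' hiB⟩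

/-- relabeling partitions along an injective map -/
lemma parts_image [DecidableEq κ] (f : ι → κ) (hf : Function.Injective f) (s : Finset ι) :
    parts (s.image f) = (parts s).image (fun π => π.image (fun B => B.image f)) := by
  ext τ
  constructor
  · intro hτ
    refine mem_image.2 ⟨τ.image (fun B => B.preimage f hf.injOn), ?_, ?_⟩
    · refine mem_parts_of _ _ ?_ ?_ ?_ ?_
      · rintro B hB
        obtain ⟨C, hC, rfl⟩ := mem_image.1 hB
        intro i hi
        have : f i ∈ C := by simpa using hi
        have : f i ∈ s.image f := parts_block_subset hτ hC this
        obtain ⟨i', hi', he⟩ := mem_image.1 this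
        rwa [hf he] at hi'
      · rintro B hB
        obtain ⟨C, hC, rfl⟩ := mem_image.1 hB
        obtain ⟨x, hx⟩ := parts_block_nonempty hτ hC
        have hxr : x ∈ s.image f := parts_block_subset hτ hC hx
        obtain ⟨i, _, rfl⟩ := mem_image.1 hxr
        exact ⟨i, by simpa using hx⟩
      · intro i hi
        obtain ⟨C, hC, hiC⟩ := parts_cover hτ (mem_image_of_mem f hi)
        exact ⟨C.preimage f hf.injOn, mem_image_of_mem _ hC, by simpa using hiC⟩
      · rintro B hB B' hB' i hi hi'
        obtain ⟨C, hC, rfl⟩ := mem_image.1 hB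
        obtain ⟨C', hC', rfl⟩ := mem_image.1 hB'
        have h1 : f i ∈ C := by simpa using hi
        have h2 : f i ∈ C' := by simpa using hi'
        rw [parts_disj hτ hC hC' h1 h2]
    · rw [image_image]
      have : ∀ C ∈ τ, ((fun B => B.image f) ∘ fun B => B.preimage f hf.injOn) C = C := by
        intro C hC
        simp only [Function.comp_apply]
        rw [Finset.image_preimage]
        refine Finset.filter_true_of_mem ?_
        intro x hx
        have := parts_block_subset hτ hC hx
        obtain ⟨i, _, rfl⟩ := mem_image.1 this
        exact ⟨i, rfl⟩
      rw [image_congr this]; simp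
  · intro hτ
    obtain ⟨π, hπ, rfl⟩ := mem_image.1 hτ
    refine mem_parts_of _ _ ?_ ?_ ?_ ?_
    · rintro B hB
      obtain ⟨C, hC, rfl⟩ := mem_image.1 hB
      exact image_subset_image (parts_block_subset hπ hC)
    · rintro B hB
      obtain ⟨C, hC, rfl⟩ := mem_image.1 hB
      exact (parts_block_nonempty hπ hC).image f
    · intro x hx
      obtain ⟨i, hi, rfl⟩ := mem_image.1 hx
      obtain ⟨C, hC, hiC⟩ := parts_cover hπ hi
      exact ⟨C.image f, mem_image_of_mem _ hC, mem_image_of_mem f hiC⟩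
    · rintro B hB B' hB' x hx hx'
      obtain ⟨C, hC, rfl⟩ := mem_image.1 hB
      obtain ⟨C', hC', rfl⟩ := mem_image.1 hB'
      obtain ⟨i, hiC, rfl⟩ := mem_image.1 hx
      have : i ∈ C' := by
        obtain ⟨i', hi', he⟩ := mem_image.1 hx'
        rwa [hf he] at hi'
      rw [parts_disj hπ hC hC' hiC this]

lemma jointCumulant_comp {Ω : Type*} [MeasurableSpace Ω] (μ : Measure Ω) [DecidableEq κ]
    (f : ι → κ) (hf : Function.Injective f) (s : Finset ι) (Z : κ → Ω → ℝ) :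
    jointCumulant μ (s.image f) Z = jointCumulant μ s (fun i => Z (f i)) := by
  rw [jointCumulant_eq, jointCumulant_eq, parts_image f hf]
  rw [Finset.sum_image (fun π _ π' _ h => Finset.image_injective (Finset.image_injective hf) h)]
  refine Finset.sum_congr rfl fun π hπ => ?_
  rw [Finset.card_image_of_injective _ (Finset.image_injective hf),
    Finset.prod_image (fun B _ B' _ h => Finset.image_injective hf h)]
  refine congrArg _ (Finset.prod_congr rfl fun B _ => ?_)
  refine congrArg _ (funext fun ω => ?_)
  rw [Finset.prod_image (fun i _ i' _ h => hf h)]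


variable {m : ℕ}


def kk (m : ℕ) : Bool ⊕ Fin m → Option (Fin m) := Sum.elim (fun _ => none) some
def sec (m : ℕ) : Option (Fin m) → Bool ⊕ Fin m := fun o => Option.elim o (Sum.inl true) Sum.inr

lemma kk_sec (i : Option (Fin m)) : kk m (sec m i) = i := by cases i <;> rfl

def sameBlock (π : Finset (Finset (Bool ⊕ Fin m))) : Prop :=
  ∃ B ∈ π, Sum.inl true ∈ B ∧ Sum.inl false ∈ B

noncomputable def gB (B : Finset (Option (Fin m))) : Finset (Bool ⊕ Fin m) :=
  univ.filter (fun x => kk m x ∈ B)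

lemma mem_gB {B : Finset (Option (Fin m))} {x : Bool ⊕ Fin m} :
    x ∈ gB B ↔ kk m x ∈ B := by simp [gB]

lemma image_kk_gB (B : Finset (Option (Fin m))) : (gB B).image (kk m) = B := by
  ext i
  simp only [mem_image]
  constructor
  · rintro ⟨x, hx, rfl⟩; exact mem_gB.1 hx
  · intro hi; exact ⟨sec m i, mem_gB.2 (by rwa [kk_sec]), kk_sec i⟩

lemma gB_injective : Function.Injective (gB (m := m)) := fun B B' h => by
  rw [← image_kk_gB B, h, image_kk_gB]

lemma sat {π : Finset (Finset (Bool ⊕ Fin m))} (hπ : π ∈ parts (univ : Finset (Bool ⊕ Fin m)))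
    (hs : sameBlock π) {B : Finset (Bool ⊕ Fin m)} (hB : B ∈ π) {x y : Bool ⊕ Fin m}
    (hx : x ∈ B) (hk : kk m y = kk m x) : y ∈ B := by
  obtain ⟨B0, hB0, ht, hf⟩ := hs
  cases x with
  | inl bx =>
    cases y with
    | inl by' =>
      have hxB0 : Sum.inl bx ∈ B0 := by cases bx <;> assumption
      have : B = B0 := parts_disj hπ hB hB0 hx hxB0
      subst this
      cases by' <;> assumption
    | inr j => simp [kk] at hk
  | inr jx =>
    cases y with
    | inl by' => simp [kk] at hk
    | inr j => simp only [kk, Sum.elim_inr, Option.some.injEq] at hk; subst hk; exact hx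

lemma gB_image_kk {π : Finset (Finset (Bool ⊕ Fin m))}
    (hπ : π ∈ parts (univ : Finset (Bool ⊕ Fin m))) (hs : sameBlock π)
    {B : Finset (Bool ⊕ Fin m)} (hB : B ∈ π) : gB (B.image (kk m)) = B := by
  ext x
  rw [mem_gB, mem_image]
  constructor
  · rintro ⟨y, hy, hk⟩; exact sat hπ hs hB hy hk.symm
  · intro hx; exact ⟨x, hx, rfl⟩

lemma fib_none : (univ.filter (fun x => kk m x = none)) =
    ({Sum.inl true, Sum.inl false} : Finset (Bool ⊕ Fin m)) := by
  ext x
  cases x with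
  | inl b => rw [Finset.mem_filter]; cases b <;> simp [kk]
  | inr j => rw [Finset.mem_filter]; simp [kk]

lemma fib_some (j : Fin m) : (univ.filter (fun x => kk m x = some j)) =
    ({Sum.inr j} : Finset (Bool ⊕ Fin m)) := by
  ext x
  cases x with
  | inl b => rw [Finset.mem_filter]; simp [kk]
  | inr j' => rw [Finset.mem_filter]; simp [kk]

lemma gB_eq_biUnion (B : Finset (Option (Fin m))) :
    gB B = B.biUnion (fun i => univ.filter (fun x => kk m x = i)) := by
  ext x; simp [gB, eq_comm]

lemma claimA {Ω : Type*} [MeasurableSpace Ω] (μ : Measure Ω)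
    (W : Option (Fin m) → Ω → ℝ) (Z : Bool ⊕ Fin m → Ω → ℝ)
    (h0 : ∀ ω, W none ω = Z (Sum.inl true) ω * Z (Sum.inl false) ω)
    (h1 : ∀ j ω, W (some j) ω = Z (Sum.inr j) ω) :
    ∑ σ ∈ parts (univ : Finset (Option (Fin m))),
        wtn σ.card * ∏ B ∈ σ, ∫ ω, (∏ i ∈ B, W i ω) ∂μ =
      ∑ π ∈ (parts (univ : Finset (Bool ⊕ Fin m))).filter sameBlock,
        wtn π.card * ∏ B ∈ π, ∫ ω, (∏ x ∈ B, Z x ω) ∂μ := by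
  refine Finset.sum_nbij' (fun σ => σ.image gB) (fun π => π.image (fun B => B.image (kk m)))
    ?_ ?_ ?_ ?_ ?_
  · -- maps into filter sameBlock
    intro σ hσ
    rw [mem_filter]
    constructor
    · refine mem_parts_of _ _ (fun B _ => subset_univ _) ?_ ?_ ?_
      · rintro B hB
        obtain ⟨C, hC, rfl⟩ := mem_image.1 hB
        obtain ⟨i, hi⟩ := parts_block_nonempty hσ hC
        exact ⟨sec m i, mem_gB.2 (by rwa [kk_sec])⟩
      · intro x _
        obtain ⟨C, hC, hiC⟩ := parts_cover hσ (mem_univ (kk m x))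
        exact ⟨gB C, mem_image_of_mem _ hC, mem_gB.2 hiC⟩
      · rintro B hB B' hB' x hx hx'
        obtain ⟨C, hC, rfl⟩ := mem_image.1 hB
        obtain ⟨C', hC', rfl⟩ := mem_image.1 hB'
        rw [parts_disj hσ hC hC' (mem_gB.1 hx) (mem_gB.1 hx')]
    · obtain ⟨C, hC, hiC⟩ := parts_cover hσ (mem_univ (none : Option (Fin m)))
      exact ⟨gB C, mem_image_of_mem _ hC, mem_gB.2 hiC, mem_gB.2 hiC⟩
  · -- inverse maps into parts
    intro π hπ
    rw [mem_filter] at hπ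
    obtain ⟨hπ, hs⟩ := hπ
    refine mem_parts_of _ _ (fun B _ => subset_univ _) ?_ ?_ ?_
    · rintro B hB
      obtain ⟨C, hC, rfl⟩ := mem_image.1 hB
      exact (parts_block_nonempty hπ hC).image _
    · intro i _
      obtain ⟨C, hC, hiC⟩ := parts_cover hπ (mem_univ (sec m i))
      exact ⟨C.image (kk m), mem_image_of_mem _ hC, by
        rw [← kk_sec i]; exact mem_image_of_mem _ hiC⟩
    · rintro B hB B' hB' i hi hi'
      obtain ⟨C, hC, rfl⟩ := mem_image.1 hB
      obtain ⟨C', hC', rfl⟩ := mem_image.1 hB'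
      obtain ⟨x, hx, rfl⟩ := mem_image.1 hi
      obtain ⟨x', hx', hk⟩ := mem_image.1 hi'
      have : x' ∈ C := sat hπ hs hC hx hk
      rw [parts_disj hπ hC hC' this hx']
  · -- left inverse
    intro σ hσ
    show ((σ.image gB).image fun B => B.image (kk m)) = σ
    rw [image_image]
    have : ∀ C ∈ σ, ((fun B => B.image (kk m)) ∘ gB) C = C := fun C _ => image_kk_gB C
    rw [image_congr this]; simp
  · -- right inverse
    intro π hπ
    rw [mem_filter] at hπ
    obtain ⟨hπ, hs⟩ := hπ
    show ((π.image fun B => B.image (kk m)).image gB) = π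
    rw [image_image]
    have : ∀ C ∈ π, (gB ∘ fun B => B.image (kk m)) C = C := fun C hC => gB_image_kk hπ hs hC
    rw [image_congr this]; simp
  · -- value equality
    intro σ hσ
    rw [card_image_of_injective _ gB_injective,
      Finset.prod_image (fun B _ B' _ h => gB_injective h)]
    refine congrArg _ (Finset.prod_congr rfl fun C _ => ?_)
    refine congrArg _ (funext fun ω => ?_)
    rw [gB_eq_biUnion, Finset.prod_biUnion]
    · refine Finset.prod_congr rfl fun i _ => ?_
      cases i with
      | none =>
        rw [fib_none, h0 ω]
        rw [Finset.prod_pair (by simp)]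
      | some j =>
        rw [fib_some, h1 j ω, Finset.prod_singleton]
    · intro i _ i' _ hne
      simp only [Finset.disjoint_filter]
      rintro x _ rfl h
      exact hne h

/-- the factorial counting identity -/
lemma sum_powerset_fact (F : Finset ι) :
    ∑ T ∈ F.powerset, (T.card).factorial * (F.card - T.card).factorial
      = (F.card + 1).factorial := by
  rw [Finset.sum_powerset]
  have h1 : ∀ j ∈ Finset.range (F.card + 1),
      ∑ T ∈ Finset.powersetCard j F, (T.card).factorial * (F.card - T.card).factorial
        = F.card.factorial := by
    intro j hj
    have hj' : j ≤ F.card := Nat.lt_succ_iff.1 (Finset.mem_range.1 hj)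
    have : ∀ T ∈ Finset.powersetCard j F,
        (T.card).factorial * (F.card - T.card).factorial
          = j.factorial * (F.card - j).factorial := by
      intro T hT
      rw [(Finset.mem_powersetCard.1 hT).2]
    rw [Finset.sum_congr rfl this, Finset.sum_const, Finset.card_powersetCard, smul_eq_mul,
      ← mul_assoc, Nat.choose_mul_factorial_mul_factorial hj']
  rw [Finset.sum_congr rfl h1, Finset.sum_const, Finset.card_range, smul_eq_mul,
    Nat.factorial_succ]

noncomputable def splits (π : Finset (Finset (Bool ⊕ Fin m))) :
    Finset (Finset (Finset (Bool ⊕ Fin m))) :=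
  π.powerset.filter
    (fun S => (∃ B ∈ S, Sum.inl true ∈ B) ∧ ∀ B ∈ S, Sum.inl false ∉ B)

lemma counting {π : Finset (Finset (Bool ⊕ Fin m))}
    (hπ : π ∈ parts (univ : Finset (Bool ⊕ Fin m))) (hsep : ¬ sameBlock π) :
    ∑ S ∈ splits π, wtn S.card * wtn (π.card - S.card) = - wtn π.card := by
  obtain ⟨Bx, hBx, hBxt⟩ := parts_cover hπ (mem_univ (Sum.inl true))
  obtain ⟨By, hBy, hByf⟩ := parts_cover hπ (mem_univ (Sum.inl false))
  have hne : Bx ≠ By := fun h => hsep ⟨Bx, hBx, hBxt, h ▸ hByf⟩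
  set F0 := (π.erase Bx).erase By with hF0
  have hBye : By ∈ π.erase Bx := Finset.mem_erase.2 ⟨hne.symm, hBy⟩
  have hcard2 : 2 ≤ π.card := Finset.one_lt_card.2 ⟨Bx, hBx, By, hBy, hne⟩
  have hNcard : F0.card = π.card - 2 := by
    rw [hF0, Finset.card_erase_of_mem hBye, Finset.card_erase_of_mem hBx]
    omega
  set N := F0.card with hN
  have hsplits : splits π = F0.powerset.image (insert Bx) := by
    ext S
    simp only [splits, Finset.mem_filter, Finset.mem_powerset, Finset.mem_image]
    constructor
    · rintro ⟨hSπ, ⟨B, hBS, hBt⟩, hSf⟩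
      have hBBx : B = Bx := parts_disj hπ (hSπ hBS) hBx hBt hBxt
      subst hBBx
      refine ⟨S.erase B, ?_, ?_⟩
      · intro C hC
        have hCB := Finset.mem_erase.1 hC
        refine Finset.mem_erase.2 ⟨?_, Finset.mem_erase.2 ⟨hCB.1, hSπ hCB.2⟩⟩
        rintro rfl
        exact hSf C hCB.2 hByf
      · exact Finset.insert_erase hBS
    · rintro ⟨T, hT, rfl⟩
      have hTsub : T ⊆ π := fun C hC =>
        Finset.mem_of_mem_erase (Finset.mem_of_mem_erase (hT hC))
      refine ⟨Finset.insert_subset hBx hTsub, ⟨Bx, Finset.mem_insert_self _ _, hBxt⟩, ?_⟩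
      intro B hB hBf
      rcases Finset.mem_insert.1 hB with rfl | hBT
      · exact hne (parts_disj hπ hBx hBy hBf hByf)
      · have : B = By := parts_disj hπ (hTsub hBT) hBy hBf hByf
        exact (Finset.mem_erase.1 (hT hBT)).1 this
  have hBxnot : ∀ T ∈ F0.powerset, Bx ∉ T := by
    intro T hT hBxT
    exact (Finset.mem_erase.1 (Finset.mem_of_mem_erase (Finset.mem_powerset.1 hT hBxT))).1 rfl
  rw [hsplits, Finset.sum_image (fun T hT T' hT' h => by
    rw [← Finset.erase_insert (hBxnot T hT), h, Finset.erase_insert (hBxnot T' hT')])]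
  have hval : ∀ T ∈ F0.powerset,
      wtn (insert Bx T).card * wtn (π.card - (insert Bx T).card)
        = (-1 : ℝ) ^ N * ((T.card).factorial * (N - T.card).factorial : ℕ) := by
    intro T hT
    have hk : T.card ≤ N := Finset.card_le_card (Finset.mem_powerset.1 hT)
    have hcardi : (insert Bx T).card = T.card + 1 :=
      Finset.card_insert_of_notMem (hBxnot T hT)
    have hn : π.card = N + 2 := by omega
    rw [hcardi, hn]
    have h1 : wtn (T.card + 1) = (-1 : ℝ) ^ T.card * (T.card).factorial := by
      simp [wtn]
    have h2 : wtn (N + 2 - (T.card + 1)) = (-1 : ℝ) ^ (N - T.card) * (N - T.card).factorial := by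
      have : N + 2 - (T.card + 1) - 1 = N - T.card := by omega
      rw [wtn, this]
    rw [h1, h2]
    have : (-1 : ℝ) ^ T.card * (-1 : ℝ) ^ (N - T.card) = (-1 : ℝ) ^ N := by
      rw [← pow_add]
      congr 1
      omega
    push_cast
    rw [← this]
    ring
  rw [Finset.sum_congr rfl hval, ← Finset.mul_sum]
  have hsum : ∑ T ∈ F0.powerset, (((T.card).factorial * (N - T.card).factorial : ℕ) : ℝ)
      = ((N + 1).factorial : ℝ) := by
    rw [← Nat.cast_sum, sum_powerset_fact F0]
  rw [hsum]
  have hn : π.card = N + 2 := by omega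
  have h21 : N + 2 - 1 = N + 1 := rfl
  rw [hn, wtn, h21, pow_succ]
  ring

namespace B
variable {m : ℕ}

noncomputable def ss1 (J : Finset (Fin m)) : Finset (Bool ⊕ Fin m) :=
  insert (Sum.inl true) (J.image Sum.inr)
noncomputable def ss2 (J : Finset (Fin m)) : Finset (Bool ⊕ Fin m) :=
  insert (Sum.inl false) (Jᶜ.image Sum.inr)

lemma ss1_ss2 (J : Finset (Fin m)) (x : Bool ⊕ Fin m) : x ∈ ss1 J ↔ x ∉ ss2 J := by
  rcases x with b | j
  · cases b <;> simp [ss1, ss2]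
  · simp [ss1, ss2]

lemma mem_splits {π S : Finset (Finset (Bool ⊕ Fin m))} :
    S ∈ splits π ↔ S ⊆ π ∧ (∃ B ∈ S, Sum.inl true ∈ B) ∧ ∀ B ∈ S, Sum.inl false ∉ B := by
  simp [splits]

noncomputable def Jof (S : Finset (Finset (Bool ⊕ Fin m))) : Finset (Fin m) :=
  univ.filter (fun j => ∃ B ∈ S, Sum.inr j ∈ B)

lemma union_mem_parts {J : Finset (Fin m)} {π1 π2 : Finset (Finset (Bool ⊕ Fin m))}
    (h1 : π1 ∈ parts (ss1 J)) (h2 : π2 ∈ parts (ss2 J)) :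
    π1 ∪ π2 ∈ parts (univ : Finset (Bool ⊕ Fin m)) := by
  refine mem_parts_of _ _ (fun B _ => subset_univ _) ?_ ?_ ?_
  · intro B hB
    rcases Finset.mem_union.1 hB with h | h
    · exact parts_block_nonempty h1 h
    · exact parts_block_nonempty h2 h
  · intro x _
    by_cases hx : x ∈ ss1 J
    · obtain ⟨B, hB, hxB⟩ := parts_cover h1 hx
      exact ⟨B, Finset.mem_union_left _ hB, hxB⟩
    · obtain ⟨B, hB, hxB⟩ := parts_cover h2 (by
        by_contra hn
        exact hx ((ss1_ss2 J x).2 hn))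
      exact ⟨B, Finset.mem_union_right _ hB, hxB⟩
  · intro B hB B' hB' x hx hx'
    rcases Finset.mem_union.1 hB with h | h <;> rcases Finset.mem_union.1 hB' with h' | h'
    · exact parts_disj h1 h h' hx hx'
    · exact absurd (parts_block_subset h2 h' hx') ((ss1_ss2 J x).1 (parts_block_subset h1 h hx))
    · exact absurd (parts_block_subset h2 h hx) ((ss1_ss2 J x).1 (parts_block_subset h1 h' hx'))
    · exact parts_disj h2 h h' hx hx'

lemma union_not_sameBlock {J : Finset (Fin m)} {π1 π2 : Finset (Finset (Bool ⊕ Fin m))}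
    (h1 : π1 ∈ parts (ss1 J)) (h2 : π2 ∈ parts (ss2 J)) : ¬ sameBlock (π1 ∪ π2) := by
  rintro ⟨B, hB, ht, hf⟩
  rcases Finset.mem_union.1 hB with h | h
  · exact (ss1_ss2 J (Sum.inl false)).1 (parts_block_subset h1 h hf) (by simp [ss2])
  · exact (ss1_ss2 J (Sum.inl true)).1 (by simp [ss1]) (parts_block_subset h2 h ht)

lemma disj_π1_π2 {J : Finset (Fin m)} {π1 π2 : Finset (Finset (Bool ⊕ Fin m))}
    (h1 : π1 ∈ parts (ss1 J)) (h2 : π2 ∈ parts (ss2 J)) : Disjoint π1 π2 := by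
  rw [Finset.disjoint_left]
  intro B hB hB'
  obtain ⟨x, hx⟩ := parts_block_nonempty h1 hB
  exact (ss1_ss2 J x).1 (parts_block_subset h1 hB hx) (parts_block_subset h2 hB' hx)

lemma π1_mem_splits {J : Finset (Fin m)} {π1 π2 : Finset (Finset (Bool ⊕ Fin m))}
    (h1 : π1 ∈ parts (ss1 J)) (h2 : π2 ∈ parts (ss2 J)) : π1 ∈ splits (π1 ∪ π2) := by
  refine mem_splits.2 ⟨Finset.subset_union_left, ?_, ?_⟩
  · exact parts_cover h1 (by simp [ss1])
  · intro B hB hf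
    exact (ss1_ss2 J (Sum.inl false)).1 (parts_block_subset h1 hB hf) (by simp [ss2])

lemma Jof_π1 {J : Finset (Fin m)} {π1 : Finset (Finset (Bool ⊕ Fin m))}
    (h1 : π1 ∈ parts (ss1 J)) : Jof π1 = J := by
  ext j
  simp only [Jof, Finset.mem_filter, Finset.mem_univ, true_and]
  constructor
  · rintro ⟨B, hB, hjB⟩
    have := parts_block_subset h1 hB hjB
    simpa [ss1] using this
  · intro hj
    exact parts_cover h1 (by simp [ss1, hj])

lemma S_mem_parts {π S : Finset (Finset (Bool ⊕ Fin m))}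
    (hπ : π ∈ parts (univ : Finset (Bool ⊕ Fin m))) (hS : S ∈ splits π) :
    S ∈ parts (ss1 (Jof S)) := by
  obtain ⟨hSπ, ⟨Bt, hBt, hBtt⟩, hSf⟩ := mem_splits.1 hS
  refine mem_parts_of _ _ ?_ (fun B hB => parts_block_nonempty hπ (hSπ hB)) ?_ ?_
  · intro B hB x hx
    rcases x with b | j
    · cases b
      · exact absurd hx (hSf B hB)
      · simp [ss1]
    · simp only [ss1, Finset.mem_insert, Finset.mem_image]
      right
      exact ⟨j, by simp [Jof]; exact ⟨B, hB, hx⟩, rfl⟩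
  · intro x hx
    simp only [ss1, Finset.mem_insert, Finset.mem_image] at hx
    rcases hx with rfl | ⟨j, hj, rfl⟩
    · exact ⟨Bt, hBt, hBtt⟩
    · simp only [Jof, Finset.mem_filter] at hj
      obtain ⟨_, B, hB, hjB⟩ := hj
      exact ⟨B, hB, hjB⟩
  · intro B hB B' hB' x hx hx'
    exact parts_disj hπ (hSπ hB) (hSπ hB') hx hx'

lemma compl_mem_parts {π S : Finset (Finset (Bool ⊕ Fin m))}
    (hπ : π ∈ parts (univ : Finset (Bool ⊕ Fin m))) (hS : S ∈ splits π) :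
    π \ S ∈ parts (ss2 (Jof S)) := by
  obtain ⟨hSπ, ⟨Bt, hBt, hBtt⟩, hSf⟩ := mem_splits.1 hS
  refine mem_parts_of _ _ ?_ (fun B hB => parts_block_nonempty hπ (Finset.mem_sdiff.1 hB).1) ?_ ?_
  · intro B hB x hx
    obtain ⟨hBπ, hBS⟩ := Finset.mem_sdiff.1 hB
    rcases x with b | j
    · cases b
      · simp [ss2]
      · have hBeq : B = Bt := parts_disj hπ hBπ (hSπ hBt) hx hBtt
        exact absurd (hBeq ▸ hBt) hBS
    · simp only [ss2, Finset.mem_insert, Finset.mem_image]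
      right
      refine ⟨j, ?_, rfl⟩
      simp only [Finset.mem_compl, Jof, Finset.mem_filter, Finset.mem_univ, true_and]
      rintro ⟨B', hB', hjB'⟩
      have : B = B' := parts_disj hπ hBπ (hSπ hB') hx hjB'
      exact hBS (this ▸ hB')
  · intro x hx
    simp only [ss2, Finset.mem_insert, Finset.mem_image] at hx
    rcases hx with rfl | ⟨j, hj, rfl⟩
    · obtain ⟨B, hB, hxB⟩ := parts_cover hπ (mem_univ (Sum.inl false))
      exact ⟨B, Finset.mem_sdiff.2 ⟨hB, fun h => hSf B h hxB⟩, hxB⟩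
    · simp only [Finset.mem_compl, Jof, Finset.mem_filter, Finset.mem_univ, true_and] at hj
      obtain ⟨B, hB, hxB⟩ := parts_cover hπ (mem_univ (Sum.inr j))
      exact ⟨B, Finset.mem_sdiff.2 ⟨hB, fun h => hj ⟨B, h, hxB⟩⟩, hxB⟩
  · intro B hB B' hB' x hx hx'
    exact parts_disj hπ (Finset.mem_sdiff.1 hB).1 (Finset.mem_sdiff.1 hB').1 hx hx'

set_option maxHeartbeats 2000000
set_option linter.constructorNameAsVariable false
lemma claimB (E : Finset (Bool ⊕ Fin m) → ℝ) :
    ∑ J : Finset (Fin m),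
        (∑ π1 ∈ parts (ss1 J), wtn π1.card * ∏ B ∈ π1, E B) *
          (∑ π2 ∈ parts (ss2 J), wtn π2.card * ∏ B ∈ π2, E B) =
      - ∑ π ∈ (parts (univ : Finset (Bool ⊕ Fin m))).filter (fun π => ¬ sameBlock π),
          wtn π.card * ∏ B ∈ π, E B := by
  have step1 : ∑ J : Finset (Fin m),
      (∑ π1 ∈ parts (ss1 J), wtn π1.card * ∏ B ∈ π1, E B) *
        (∑ π2 ∈ parts (ss2 J), wtn π2.card * ∏ B ∈ π2, E B)
      = ∑ p ∈ (univ : Finset (Finset (Fin m))).sigma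
            (fun J => parts (ss1 J) ×ˢ parts (ss2 J)),
          (wtn p.2.1.card * ∏ B ∈ p.2.1, E B) * (wtn p.2.2.card * ∏ B ∈ p.2.2, E B) := by
    rw [Finset.sum_sigma]
    refine Finset.sum_congr rfl fun J _ => ?_
    rw [Finset.sum_mul_sum, ← Finset.sum_product']
  rw [step1]
  have step2 : ∑ p ∈ (univ : Finset (Finset (Fin m))).sigma
        (fun J => parts (ss1 J) ×ˢ parts (ss2 J)),
      (wtn p.2.1.card * ∏ B ∈ p.2.1, E B) * (wtn p.2.2.card * ∏ B ∈ p.2.2, E B)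
      = ∑ q ∈ ((parts (univ : Finset (Bool ⊕ Fin m))).filter
            (fun π => ¬ sameBlock π)).sigma (fun π => splits π),
          (wtn q.2.card * ∏ B ∈ q.2, E B) *
            (wtn (q.1 \ q.2).card * ∏ B ∈ q.1 \ q.2, E B) := by
    refine Finset.sum_nbij' (fun p => ⟨p.2.1 ∪ p.2.2, p.2.1⟩)
      (fun q => ⟨Jof q.2, (q.2, q.1 \ q.2)⟩) ?_ ?_ ?_ ?_ ?_
    · rintro ⟨J, π1, π2⟩ hp
      rw [Finset.mem_sigma, Finset.mem_product] at hp
      obtain ⟨_, h1, h2⟩ := hp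
      rw [Finset.mem_sigma, Finset.mem_filter]
      exact ⟨⟨union_mem_parts h1 h2, union_not_sameBlock h1 h2⟩, π1_mem_splits h1 h2⟩
    · rintro ⟨π, S⟩ hq
      rw [Finset.mem_sigma, Finset.mem_filter] at hq
      obtain ⟨⟨hπ, _⟩, hS⟩ := hq
      rw [Finset.mem_sigma, Finset.mem_product]
      exact ⟨mem_univ _, S_mem_parts hπ hS, compl_mem_parts hπ hS⟩
    · rintro ⟨J, π1, π2⟩ hp
      rw [Finset.mem_sigma, Finset.mem_product] at hp
      obtain ⟨_, h1, h2⟩ := hp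
      have hJ : Jof π1 = J := Jof_π1 h1
      have hd : (π1 ∪ π2) \ π1 = π2 := Finset.union_sdiff_cancel_left (disj_π1_π2 h1 h2)
      simp only [hJ, hd]
    · rintro ⟨π, S⟩ hq
      rw [Finset.mem_sigma, Finset.mem_filter] at hq
      obtain ⟨⟨hπ, _⟩, hS⟩ := hq
      have : S ∪ π \ S = π := Finset.union_sdiff_of_subset (mem_splits.1 hS).1
      simp only [this]
    · rintro ⟨J, π1, π2⟩ hp
      rw [Finset.mem_sigma, Finset.mem_product] at hp
      obtain ⟨_, h1, h2⟩ := hp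
      have hd : (π1 ∪ π2) \ π1 = π2 := Finset.union_sdiff_cancel_left (disj_π1_π2 h1 h2)
      simp only [hd]
  rw [step2, Finset.sum_sigma]
  rw [← Finset.sum_neg_distrib]
  refine Finset.sum_congr rfl fun π hπ => ?_
  rw [Finset.mem_filter] at hπ
  obtain ⟨hπp, hsep⟩ := hπ
  have hval : ∀ S ∈ splits π,
      (wtn S.card * ∏ B ∈ S, E B) * (wtn (π \ S).card * ∏ B ∈ π \ S, E B)
        = wtn S.card * wtn (π.card - S.card) * ∏ B ∈ π, E B := by
    intro S hS
    have hsub : S ⊆ π := (mem_splits.1 hS).1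
    rw [Finset.card_sdiff_of_subset hsub]
    have : (∏ B ∈ π \ S, E B) * ∏ B ∈ S, E B = ∏ B ∈ π, E B := Finset.prod_sdiff hsub
    rw [← this]
    ring
  rw [Finset.sum_congr rfl hval, ← Finset.sum_mul, counting hπp hsep]
  ring
end B
end Maly

theorem malyshev_formula {Ω : Type*} [MeasurableSpace Ω] (μ : Measure Ω)
    [IsProbabilityMeasure μ] (m : ℕ) (X Y : Ω → ℝ) (Xs : Fin m → Ω → ℝ)
    (hX : Measurable X) (hY : Measurable Y) (hXs : ∀ j, Measurable (Xs j))
    (hXb : ∃ C, ∀ ω, |X ω| ≤ C) (hYb : ∃ C, ∀ ω, |Y ω| ≤ C)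
    (hXsb : ∀ j, ∃ C, ∀ ω, |Xs j ω| ≤ C) :
    jointCumulant μ (Finset.univ : Finset (Option (Fin m)))
        (fun o => Option.elim o (fun ω => X ω * Y ω) Xs) =
      jointCumulant μ (Finset.univ : Finset (Bool ⊕ Fin m))
          (Sum.elim (fun b => if b then X else Y) Xs) +
        ∑ J : Finset (Fin m),
          jointCumulant μ (insert none (J.image some)) (fun o => Option.elim o X Xs) *
            jointCumulant μ (insert none (Jᶜ.image some)) (fun o => Option.elim o Y Xs) := by
  set Zfull : Bool ⊕ Fin m → Ω → ℝ := Sum.elim (fun b => if b then X else Y) Xs with hZ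
  set E : Finset (Bool ⊕ Fin m) → ℝ := fun B => ∫ ω, (∏ x ∈ B, Zfull x ω) ∂μ with hE
  -- the left-hand side
  have hA : jointCumulant μ (Finset.univ : Finset (Option (Fin m)))
        (fun o => Option.elim o (fun ω => X ω * Y ω) Xs)
      = ∑ π ∈ (Maly.parts (univ : Finset (Bool ⊕ Fin m))).filter Maly.sameBlock,
          Maly.wtn π.card * ∏ B ∈ π, E B := by
    rw [Maly.jointCumulant_eq]
    exact Maly.claimA μ _ _ (fun ω => by simp [hZ]) (fun j ω => by simp [hZ])
  -- splitting the first right-hand term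
  have hsplit : jointCumulant μ (Finset.univ : Finset (Bool ⊕ Fin m)) Zfull
      = (∑ π ∈ (Maly.parts (univ : Finset (Bool ⊕ Fin m))).filter Maly.sameBlock,
          Maly.wtn π.card * ∏ B ∈ π, E B)
        + ∑ π ∈ (Maly.parts (univ : Finset (Bool ⊕ Fin m))).filter
            (fun π => ¬ Maly.sameBlock π),
          Maly.wtn π.card * ∏ B ∈ π, E B := by
    rw [Maly.jointCumulant_eq]
    exact (Finset.sum_filter_add_sum_filter_not _ _ _).symm
  -- rewriting the summands of the second right-hand term
  have uinj : Function.Injective (fun o => Option.elim o (Sum.inl true) Sum.inr :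
      Option (Fin m) → Bool ⊕ Fin m) := by
    intro a b h
    cases a <;> cases b <;> simp_all
  have vinj : Function.Injective (fun o => Option.elim o (Sum.inl false) Sum.inr :
      Option (Fin m) → Bool ⊕ Fin m) := by
    intro a b h
    cases a <;> cases b <;> simp_all
  have hu : ∀ J : Finset (Fin m),
      jointCumulant μ (insert none (J.image some)) (fun o => Option.elim o X Xs)
        = ∑ π1 ∈ Maly.parts (Maly.B.ss1 J), Maly.wtn π1.card * ∏ B ∈ π1, E B := by
    intro J
    have h1 : Maly.B.ss1 J = (insert none (J.image some)).image
        (fun o => Option.elim o (Sum.inl true) Sum.inr) := by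
      rw [Finset.image_insert, Finset.image_image]
      rfl
    have hfun : (fun i => Zfull ((fun o => Option.elim o (Sum.inl true) Sum.inr) i))
        = (fun o => Option.elim o X Xs) := by
      funext o
      cases o <;> simp [hZ]
    rw [← hfun, ← Maly.jointCumulant_comp μ _ uinj, ← h1, Maly.jointCumulant_eq]
  have hv : ∀ J : Finset (Fin m),
      jointCumulant μ (insert none (Jᶜ.image some)) (fun o => Option.elim o Y Xs)
        = ∑ π2 ∈ Maly.parts (Maly.B.ss2 J), Maly.wtn π2.card * ∏ B ∈ π2, E B := by
    intro J
    have h1 : Maly.B.ss2 J = (insert none (Jᶜ.image some)).image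
        (fun o => Option.elim o (Sum.inl false) Sum.inr) := by
      rw [Finset.image_insert, Finset.image_image]
      rfl
    have hfun : (fun i => Zfull ((fun o => Option.elim o (Sum.inl false) Sum.inr) i))
        = (fun o => Option.elim o Y Xs) := by
      funext o
      cases o <;> simp [hZ]
    rw [← hfun, ← Maly.jointCumulant_comp μ _ vinj, ← h1, Maly.jointCumulant_eq]
  have hB : ∑ J : Finset (Fin m),
      jointCumulant μ (insert none (J.image some)) (fun o => Option.elim o X Xs) *
        jointCumulant μ (insert none (Jᶜ.image some)) (fun o => Option.elim o Y Xs)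
      = - ∑ π ∈ (Maly.parts (univ : Finset (Bool ⊕ Fin m))).filter
            (fun π => ¬ Maly.sameBlock π),
          Maly.wtn π.card * ∏ B ∈ π, E B := by
    rw [Finset.sum_congr rfl (fun J _ => by rw [hu J, hv J])]
    exact Maly.B.claimB E
  rw [hA, hsplit, hB]
  ring
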